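/- Let I be a witnessed fuzzy interpretation that is a model of the knowledge base K2 under Łukasiewicz semantics. Then for every natural number n ≥ 1 there exist elements b_1, b_2, …, b_n ∈ Δ^I such that 1/2 = A^I(b_1) < A^I(b_2) < … < A^I(b_n) < 1. -/

import Mathlib

/-- ALC concepts over a single atomic concept `A` and a single role `R`. -/
inductive ALCConcept : Type where
  | atom : ALCConcept
  | top  : ALCConcept
  | bot  : ALCConcept
  | conj : ALCConcept → ALCConcept → ALCConcept
  | disj : ALCConcept → ALCConcept → ALCConcept
  | neg  : ALCConcept → ALCConcept
  | all  : ALCConcept → ALCConcept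
  | ex   : ALCConcept → ALCConcept

/-- Łukasiewicz t-norm. -/
def lukT (x y : ℝ) : ℝ := max (x + y - 1) 0
/-- Łukasiewicz t-conorm. -/
def lukS (x y : ℝ) : ℝ := min (x + y) 1
/-- Łukasiewicz implication. -/
def lukImp (x y : ℝ) : ℝ := min (1 - x + y) 1

/-- Value of a concept at a point under Łukasiewicz semantics. -/
noncomputable def lukVal {Δ : Type} (A : Δ → ℝ) (R : Δ → Δ → ℝ) : ALCConcept → Δ → ℝ
  | ALCConcept.atom, x => A x
  | ALCConcept.top, _ => 1
  | ALCConcept.bot, _ => 0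
  | ALCConcept.conj C D, x => lukT (lukVal A R C x) (lukVal A R D x)
  | ALCConcept.disj C D, x => lukS (lukVal A R C x) (lukVal A R D x)
  | ALCConcept.neg C, x => 1 - lukVal A R C x
  | ALCConcept.all C, x => ⨅ y, lukImp (R x y) (lukVal A R C y)
  | ALCConcept.ex C, x => ⨆ y, lukT (R x y) (lukVal A R C y)

/-- Degree of subsumption `(C ⊑ D)^I` under Łukasiewicz semantics. -/
noncomputable def lukSub {Δ : Type} (A : Δ → ℝ) (R : Δ → Δ → ℝ) (C D : ALCConcept) : ℝ :=
  ⨅ x, lukImp (lukVal A R C x) (lukVal A R D x)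

/-- A fuzzy interpretation: nonempty domain, values in `[0,1]`. -/
def IsInterp {Δ : Type} (A : Δ → ℝ) (R : Δ → Δ → ℝ) : Prop :=
  Nonempty Δ ∧ (∀ x, A x ∈ Set.Icc (0:ℝ) 1) ∧ (∀ x y, R x y ∈ Set.Icc (0:ℝ) 1)

/-- Witnessed interpretation under Łukasiewicz semantics. -/
def Witnessed {Δ : Type} (A : Δ → ℝ) (R : Δ → Δ → ℝ) : Prop :=
  ∀ (C D : ALCConcept) (x : Δ),
    (∃ y, lukVal A R (ALCConcept.ex C) x = lukT (R x y) (lukVal A R C y)) ∧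
    (∃ y, lukVal A R (ALCConcept.all C) x = lukImp (R x y) (lukVal A R C y)) ∧
    (∃ y, lukSub A R C D = lukImp (lukVal A R C y) (lukVal A R D y))

/-- `I` (with designated element `a`) is a model of the knowledge base `K2`. -/
def ModelK2 {Δ : Type} (A : Δ → ℝ) (R : Δ → Δ → ℝ) (a : Δ) : Prop :=
  A a = 1/2 ∧
  lukSub A R ALCConcept.top (ALCConcept.ex ALCConcept.top) = 1 ∧
  (lukSub A R (ALCConcept.all ALCConcept.atom) (ALCConcept.ex ALCConcept.atom) = 1 ∧
   lukSub A R (ALCConcept.ex ALCConcept.atom) (ALCConcept.all ALCConcept.atom) = 1) ∧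
  (lukSub A R ALCConcept.atom (ALCConcept.conj (ALCConcept.all ALCConcept.atom) (ALCConcept.all ALCConcept.atom)) = 1 ∧
   lukSub A R (ALCConcept.conj (ALCConcept.all ALCConcept.atom) (ALCConcept.all ALCConcept.atom)) ALCConcept.atom = 1)

section Aux
variable {Δ : Type} {A : Δ → ℝ} {R : Δ → Δ → ℝ}

lemma lukT_mem {x y : ℝ} (hx : x ∈ Set.Icc (0:ℝ) 1) (hy : y ∈ Set.Icc (0:ℝ) 1) :
    lukT x y ∈ Set.Icc (0:ℝ) 1 := by
  obtain ⟨hx0, hx1⟩ := hx; obtain ⟨hy0, hy1⟩ := hy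
  exact ⟨le_max_right _ _, max_le (by linarith) zero_le_one⟩

lemma lukImp_mem {x y : ℝ} (hx : x ∈ Set.Icc (0:ℝ) 1) (hy : y ∈ Set.Icc (0:ℝ) 1) :
    lukImp x y ∈ Set.Icc (0:ℝ) 1 := by
  obtain ⟨hx0, hx1⟩ := hx; obtain ⟨hy0, hy1⟩ := hy
  exact ⟨le_min (by linarith) zero_le_one, min_le_right _ _⟩

lemma lukVal_mem (hI : IsInterp A R) : ∀ (C : ALCConcept) (x : Δ),
    lukVal A R C x ∈ Set.Icc (0:ℝ) 1 := by
  have hΔ : Nonempty Δ := hI.1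
  intro C
  induction C with
  | atom => exact hI.2.1
  | top => intro x; simp [lukVal]
  | bot => intro x; simp [lukVal]
  | conj C D ihC ihD => intro x; exact lukT_mem (ihC x) (ihD x)
  | disj C D ihC ihD =>
      intro x
      obtain ⟨hC0, hC1⟩ := ihC x; obtain ⟨hD0, hD1⟩ := ihD x
      exact ⟨le_min (by linarith) zero_le_one, min_le_right _ _⟩
  | neg C ihC =>
      intro x
      obtain ⟨hC0, hC1⟩ := ihC x
      constructor <;> simp only [lukVal] <;> linarith
  | all C ihC =>
      intro x
      have hterm : ∀ y, lukImp (R x y) (lukVal A R C y) ∈ Set.Icc (0:ℝ) 1 :=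
        fun y => lukImp_mem (hI.2.2 x y) (ihC y)
      have hbb : BddBelow (Set.range fun y => lukImp (R x y) (lukVal A R C y)) :=
        ⟨0, by rintro _ ⟨y, rfl⟩; exact (hterm y).1⟩
      obtain ⟨y0⟩ := hI.1
      haveI : Nonempty Δ := hI.1
      exact ⟨le_ciInf fun y => (hterm y).1, le_trans (ciInf_le hbb y0) (hterm y0).2⟩
  | ex C ihC =>
      intro x
      have hterm : ∀ y, lukT (R x y) (lukVal A R C y) ∈ Set.Icc (0:ℝ) 1 :=
        fun y => lukT_mem (hI.2.2 x y) (ihC y)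
      have hba : BddAbove (Set.range fun y => lukT (R x y) (lukVal A R C y)) :=
        ⟨1, by rintro _ ⟨y, rfl⟩; exact (hterm y).2⟩
      obtain ⟨y0⟩ := hI.1
      haveI : Nonempty Δ := hI.1
      exact ⟨le_trans (hterm y0).1 (le_ciSup hba y0), ciSup_le fun y => (hterm y).2⟩

lemma sub_one_le (hI : IsInterp A R) {C D : ALCConcept}
    (h : lukSub A R C D = 1) (x : Δ) : lukVal A R C x ≤ lukVal A R D x := by
  have hbb : BddBelow (Set.range fun z => lukImp (lukVal A R C z) (lukVal A R D z)) :=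
    ⟨0, by rintro _ ⟨z, rfl⟩; exact (lukImp_mem (lukVal_mem hI C z) (lukVal_mem hI D z)).1⟩
  have h1 : (1:ℝ) ≤ lukImp (lukVal A R C x) (lukVal A R D x) := h ▸ ciInf_le hbb x
  simp only [lukImp, le_min_iff] at h1
  linarith [h1.1]

end Aux

theorem stmt0 {Δ : Type} (A : Δ → ℝ) (R : Δ → Δ → ℝ) (a : Δ)
    (hI : IsInterp A R) (hw : Witnessed A R) (hm : ModelK2 A R a)
    (n : ℕ) (hn : 1 ≤ n) :
    ∃ b : Fin n → Δ,
      A (b ⟨0, hn⟩) = 1/2 ∧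
      StrictMono (fun i : Fin n => A (b i)) ∧
      A (b ⟨n - 1, by omega⟩) < 1 := by
  obtain ⟨ha, h2, ⟨h3a, h3b⟩, h4a, h4b⟩ := hm
  have hsucc : ∀ x : Δ, ∃ y, R x y = 1 := by
    intro x
    obtain ⟨y, hy⟩ := (hw ALCConcept.top ALCConcept.top x).1
    refine ⟨y, ?_⟩
    have hle1 : lukVal A R (ALCConcept.ex ALCConcept.top) x ≤ 1 :=
      (lukVal_mem hI _ x).2
    have hge1 : (1:ℝ) ≤ lukVal A R (ALCConcept.ex ALCConcept.top) x := by
      have := sub_one_le hI h2 x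
      simpa [lukVal] using this
    have heq : lukVal A R (ALCConcept.ex ALCConcept.top) x = 1 := le_antisymm hle1 hge1
    rw [heq] at hy
    have hr0 := (hI.2.2 x y).1
    have htop : lukVal A R ALCConcept.top y = 1 := rfl
    rw [htop] at hy
    have : lukT (R x y) 1 = R x y := by
      simp only [lukT]
      rw [max_eq_left (by linarith)]
      ring
    rw [this] at hy
    exact hy.symm
  choose succ hsuccR using hsucc
  have key : ∀ x : Δ, 1/2 ≤ A x → A (succ x) = (1 + A x) / 2 := by
    intro x hx
    set f := lukVal A R (ALCConcept.all ALCConcept.atom) x with hf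
    have hconj : lukVal A R (ALCConcept.conj (ALCConcept.all ALCConcept.atom)
        (ALCConcept.all ALCConcept.atom)) x = lukT f f := rfl
    have h4a' := sub_one_le hI h4a x
    have h4b' := sub_one_le hI h4b x
    rw [show lukVal A R ALCConcept.atom x = A x from rfl, hconj] at h4a' h4b'
    have hAf : A x = 2 * f - 1 := by
      simp only [lukT, le_max_iff, max_le_iff] at h4a' h4b'
      rcases h4a' with h | h
      · linarith [h4b'.1]
      · linarith
    have hfval : f = (1 + A x) / 2 := by linarith
    set y := succ x with hy
    have hRy : R x y = 1 := hsuccR x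
    have hAy0 := (hI.2.1 y).1
    have hAy1 := (hI.2.1 y).2
    have hexle : lukVal A R (ALCConcept.ex ALCConcept.atom) x ≤ f := sub_one_le hI h3b x
    have hba : BddAbove (Set.range fun z => lukT (R x z) (lukVal A R ALCConcept.atom z)) :=
      ⟨1, by rintro _ ⟨z, rfl⟩; exact (lukT_mem (hI.2.2 x z) (hI.2.1 z)).2⟩
    have hup : A y ≤ f := by
      have h1 : lukT (R x y) (lukVal A R ALCConcept.atom y) ≤
          lukVal A R (ALCConcept.ex ALCConcept.atom) x := le_ciSup hba y
      have h2' : lukT (R x y) (A y) = A y := by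
        rw [hRy]; simp only [lukT]
        rw [max_eq_left (by linarith)]; ring
      calc A y = lukT (R x y) (lukVal A R ALCConcept.atom y) := by
                  rw [show lukVal A R ALCConcept.atom y = A y from rfl, h2']
        _ ≤ _ := h1
        _ ≤ f := hexle
    have hbb : BddBelow (Set.range fun z => lukImp (R x z) (lukVal A R ALCConcept.atom z)) :=
      ⟨0, by rintro _ ⟨z, rfl⟩; exact (lukImp_mem (hI.2.2 x z) (hI.2.1 z)).1⟩
    have hlo : f ≤ A y := by
      have h1 : f ≤ lukImp (R x y) (lukVal A R ALCConcept.atom y) := ciInf_le hbb y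
      have h2' : lukImp (R x y) (A y) = A y := by
        rw [hRy]; simp only [lukImp]
        rw [min_eq_left (by linarith)]; ring
      rw [show lukVal A R ALCConcept.atom y = A y from rfl, h2'] at h1
      exact h1
    have : A y = f := le_antisymm hup hlo
    rw [this, hfval]
  set c : ℕ → Δ := fun k => succ^[k] a with hc
  have hAc : ∀ k, A (c k) = 1 - (1/2 : ℝ) ^ (k + 1) := by
    intro k
    induction k with
    | zero => show A a = _; rw [ha]; norm_num
    | succ k ih =>
        have hhalf : (1/2 : ℝ) ≤ A (c k) := by
          rw [ih]
          have : (1/2:ℝ)^(k+1) ≤ (1/2:ℝ)^1 :=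
            pow_le_pow_of_le_one (by norm_num) (by norm_num) (by omega)
          simp only [pow_one] at this
          linarith
        have hstep : c (k+1) = succ (c k) := by
          simp [hc, Function.iterate_succ_apply']
        rw [hstep, key _ hhalf, ih]
        ring
  refine ⟨fun i => c i, ?_, ?_, ?_⟩
  · rw [hAc 0]; norm_num
  · intro i j hij
    simp only
    rw [hAc, hAc]
    have hij' : (i:ℕ) + 1 < (j:ℕ) + 1 := by
      have := (Fin.lt_iff_val_lt_val.mp hij); omega
    have := pow_lt_pow_right_of_lt_one₀ (by norm_num : (0:ℝ) < 1/2)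
      (by norm_num : (1/2:ℝ) < 1) hij'
    linarith
  · rw [hAc]
    have : (0:ℝ) < (1/2:ℝ)^(n-1+1) := by positivity
    linarith
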